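/- Define J(X_α, X_β) = inf over f₁, f₂ ∈ G of (‖X_α∘f₁ − X_β‖ + ‖X_α − X_β∘f₂‖). Then for X_α, X_β in F₀ (in particular with all component derivatives bounded by 1 and y + H = id), ‖X_α − X_β‖_{L^∞} ≤ 2 J(X_α, X_β). -/

import Mathlib

open MeasureTheory
open scoped ENNReal NNReal

/-- A tuple of Lagrangian coordinates `X = (y, U, H, r)`. -/
structure LagTuple where
  y : ℝ → ℝ
  U : ℝ → ℝ
  H : ℝ → ℝ
  r : ℝ → ℝ

/-- Relabeling action: `X∘f = (y∘f, U∘f, H∘f, (r∘f)·f_ξ)`. -/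
noncomputable def LagTuple.comp (X : LagTuple) (f : ℝ → ℝ) : LagTuple :=
  ⟨X.y ∘ f, X.U ∘ f, X.H ∘ f, fun ξ => X.r (f ξ) * deriv f ξ⟩

/-- Membership in the relabeling group `G`. -/
def InG (f : Homeomorph ℝ ℝ) : Prop :=
  (∃ C : ℝ, ∀ x, |f x - x| ≤ C) ∧
  (∃ L : NNReal, LipschitzWith L (fun x => f x - x)) ∧
  (∃ C : ℝ, ∀ x, |f.symm x - x| ≤ C) ∧
  (∃ L : NNReal, LipschitzWith L (fun x => f.symm x - x)) ∧
  MemLp (fun x => deriv f x - 1) 2 (volume : Measure ℝ)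

/-- The `L^∞`-type distance `‖X - Y‖_{L^∞}`, with the identity subtracted in
the `y`-component. -/
noncomputable def LinfDist (X Y : LagTuple) : ℝ≥0∞ :=
  (⨆ ξ : ℝ, (‖X.y ξ - Y.y ξ‖₊ : ℝ≥0∞)) +
    (⨆ ξ : ℝ, (‖X.U ξ - Y.U ξ‖₊ : ℝ≥0∞)) +
    ⨆ ξ : ℝ, (‖X.H ξ - Y.H ξ‖₊ : ℝ≥0∞)

/-- The `E`-norm distance `‖X - Y‖_E = ‖ζ‖_V + ‖U‖_{H¹} + ‖H‖_V + ‖r‖_{L²}`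
of the difference. -/
noncomputable def ELagDist (X Y : LagTuple) : ℝ≥0∞ :=
  LinfDist X Y +
    eLpNorm (fun ξ => deriv X.y ξ - deriv Y.y ξ) 2 (volume : Measure ℝ) +
    eLpNorm (fun ξ => X.U ξ - Y.U ξ) 2 (volume : Measure ℝ) +
    eLpNorm (fun ξ => deriv X.U ξ - deriv Y.U ξ) 2 (volume : Measure ℝ) +
    eLpNorm (fun ξ => deriv X.H ξ - deriv Y.H ξ) 2 (volume : Measure ℝ) +
    eLpNorm (fun ξ => X.r ξ - Y.r ξ) 2 (volume : Measure ℝ)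

/-- `J(X_α,X_β) = inf_{f₁,f₂ ∈ G} (‖X_α∘f₁ - X_β‖ + ‖X_α - X_β∘f₂‖)`. -/
noncomputable def Jdist (Xα Xβ : LagTuple) : ℝ≥0∞ :=
  ⨅ (f₁ : Homeomorph ℝ ℝ) (_ : InG f₁) (f₂ : Homeomorph ℝ ℝ) (_ : InG f₂),
    (ELagDist (Xα.comp f₁) Xβ + ELagDist Xα (Xβ.comp f₂))

/-- Membership in the section `F₀`: `y + H = id`, `0 ≤ y_ξ, H_ξ ≤ 1`,
`|U_ξ| ≤ 1` and the energy identity hold. -/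
def InF0 (X : LagTuple) : Prop :=
  (∀ ξ, X.y ξ + X.H ξ = ξ) ∧
  LipschitzWith 1 X.y ∧ LipschitzWith 1 X.U ∧ LipschitzWith 1 X.H ∧
  (∀ᵐ ξ : ℝ, 0 ≤ deriv X.y ξ ∧ deriv X.y ξ ≤ 1) ∧
  (∀ᵐ ξ : ℝ, 0 ≤ deriv X.H ξ ∧ deriv X.H ξ ≤ 1) ∧
  (∀ᵐ ξ : ℝ, |deriv X.U ξ| ≤ 1) ∧
  ∀ᵐ ξ : ℝ, deriv X.y ξ * deriv X.H ξ =
    (deriv X.y ξ)^2 * (X.U ξ)^2 + (deriv X.U ξ)^2 + (X.r ξ)^2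

private lemma enn_tri (a b c : ℝ) :
    (‖a - c‖₊ : ℝ≥0∞) ≤ (‖a - b‖₊ : ℝ≥0∞) + ‖b - c‖₊ := by
  rw [← ENNReal.coe_add, ENNReal.coe_le_coe, ← nndist_eq_nnnorm, ← nndist_eq_nnnorm,
    ← nndist_eq_nnnorm]
  exact nndist_triangle a b c

/-- Key pointwise/sup estimates: if `X.y + X.H = id = Z.y + Z.H` and the components of `X`
are 1-Lipschitz, then for any relabeling function `g` the sups of the plain differences are
controlled by the sups of the `g`-relabeled differences. -/
private lemma key_est (X Z : LagTuple) (hX : ∀ ξ, X.y ξ + X.H ξ = ξ)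
    (hZ : ∀ ξ, Z.y ξ + Z.H ξ = ξ)
    (hy : LipschitzWith 1 X.y) (hU : LipschitzWith 1 X.U) (hH : LipschitzWith 1 X.H)
    (g : ℝ → ℝ) :
    (⨆ ξ : ℝ, (‖X.y ξ - Z.y ξ‖₊ : ℝ≥0∞)) ≤
        2 * (⨆ ξ : ℝ, (‖X.y (g ξ) - Z.y ξ‖₊ : ℝ≥0∞)) +
          (⨆ ξ : ℝ, (‖X.H (g ξ) - Z.H ξ‖₊ : ℝ≥0∞)) ∧
    (⨆ ξ : ℝ, (‖X.U ξ - Z.U ξ‖₊ : ℝ≥0∞)) ≤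
        (⨆ ξ : ℝ, (‖X.y (g ξ) - Z.y ξ‖₊ : ℝ≥0∞)) +
          (⨆ ξ : ℝ, (‖X.U (g ξ) - Z.U ξ‖₊ : ℝ≥0∞)) +
          (⨆ ξ : ℝ, (‖X.H (g ξ) - Z.H ξ‖₊ : ℝ≥0∞)) ∧
    (⨆ ξ : ℝ, (‖X.H ξ - Z.H ξ‖₊ : ℝ≥0∞)) ≤
        (⨆ ξ : ℝ, (‖X.y (g ξ) - Z.y ξ‖₊ : ℝ≥0∞)) +
          2 * (⨆ ξ : ℝ, (‖X.H (g ξ) - Z.H ξ‖₊ : ℝ≥0∞)) := by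
  set SY : ℝ≥0∞ := ⨆ ξ : ℝ, (‖X.y (g ξ) - Z.y ξ‖₊ : ℝ≥0∞) with hSY
  set SU : ℝ≥0∞ := ⨆ ξ : ℝ, (‖X.U (g ξ) - Z.U ξ‖₊ : ℝ≥0∞) with hSU
  set SH : ℝ≥0∞ := ⨆ ξ : ℝ, (‖X.H (g ξ) - Z.H ξ‖₊ : ℝ≥0∞) with hSH
  have hYle : ∀ ξ : ℝ, (‖X.y (g ξ) - Z.y ξ‖₊ : ℝ≥0∞) ≤ SY := fun ξ =>
    le_iSup (fun ξ : ℝ => (‖X.y (g ξ) - Z.y ξ‖₊ : ℝ≥0∞)) ξ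
  have hUle : ∀ ξ : ℝ, (‖X.U (g ξ) - Z.U ξ‖₊ : ℝ≥0∞) ≤ SU := fun ξ =>
    le_iSup (fun ξ : ℝ => (‖X.U (g ξ) - Z.U ξ‖₊ : ℝ≥0∞)) ξ
  have hHle : ∀ ξ : ℝ, (‖X.H (g ξ) - Z.H ξ‖₊ : ℝ≥0∞) ≤ SH := fun ξ =>
    le_iSup (fun ξ : ℝ => (‖X.H (g ξ) - Z.H ξ‖₊ : ℝ≥0∞)) ξ
  -- the displacement of `g` is controlled by `SY + SH`
  have hd : ∀ ξ : ℝ, (‖g ξ - ξ‖₊ : ℝ≥0∞) ≤ SY + SH := by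
    intro ξ
    have hsplit : g ξ - ξ = (X.y (g ξ) - Z.y ξ) + (X.H (g ξ) - Z.H ξ) := by
      have h1 := hX (g ξ); have h2 := hZ ξ; linarith
    calc (‖g ξ - ξ‖₊ : ℝ≥0∞)
        = ‖(X.y (g ξ) - Z.y ξ) + (X.H (g ξ) - Z.H ξ)‖₊ := by rw [hsplit]
      _ ≤ (‖X.y (g ξ) - Z.y ξ‖₊ : ℝ≥0∞) + ‖X.H (g ξ) - Z.H ξ‖₊ := by
          rw [← ENNReal.coe_add, ENNReal.coe_le_coe]; exact nnnorm_add_le _ _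
      _ ≤ SY + SH := add_le_add (hYle ξ) (hHle ξ)
  -- 1-Lipschitz increments are controlled by the displacement
  have hlip : ∀ (F : ℝ → ℝ), LipschitzWith 1 F →
      ∀ ξ : ℝ, (‖F ξ - F (g ξ)‖₊ : ℝ≥0∞) ≤ ‖g ξ - ξ‖₊ := by
    intro F hF ξ
    have h := hF ξ (g ξ)
    simp only [edist_nndist, nndist_eq_nnnorm, ENNReal.coe_one, one_mul] at h
    have hr : (‖ξ - g ξ‖₊ : ℝ≥0∞) = ‖g ξ - ξ‖₊ := by
      rw [← nndist_eq_nnnorm, ← nndist_eq_nnnorm, nndist_comm]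
    rwa [hr] at h
  refine ⟨iSup_le fun ξ => ?_, iSup_le fun ξ => ?_, iSup_le fun ξ => ?_⟩
  · calc (‖X.y ξ - Z.y ξ‖₊ : ℝ≥0∞)
        ≤ (‖X.y ξ - X.y (g ξ)‖₊ : ℝ≥0∞) + ‖X.y (g ξ) - Z.y ξ‖₊ := enn_tri _ _ _
      _ ≤ (SY + SH) + SY := add_le_add ((hlip X.y hy ξ).trans (hd ξ)) (hYle ξ)
      _ = 2 * SY + SH := by ring
  · calc (‖X.U ξ - Z.U ξ‖₊ : ℝ≥0∞)
        ≤ (‖X.U ξ - X.U (g ξ)‖₊ : ℝ≥0∞) + ‖X.U (g ξ) - Z.U ξ‖₊ := enn_tri _ _ _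
      _ ≤ (SY + SH) + SU := add_le_add ((hlip X.U hU ξ).trans (hd ξ)) (hUle ξ)
      _ = SY + SU + SH := by ring
  · calc (‖X.H ξ - Z.H ξ‖₊ : ℝ≥0∞)
        ≤ (‖X.H ξ - X.H (g ξ)‖₊ : ℝ≥0∞) + ‖X.H (g ξ) - Z.H ξ‖₊ := enn_tri _ _ _
      _ ≤ (SY + SH) + SH := add_le_add ((hlip X.H hH ξ).trans (hd ξ)) (hHle ξ)
      _ = SY + 2 * SH := by ring

private lemma Linf_le_ELag (X Y : LagTuple) : LinfDist X Y ≤ ELagDist X Y := by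
  unfold ELagDist
  exact le_add_right (le_add_right (le_add_right (le_add_right (le_add_right le_rfl))))

/-- For `X_α, X_β ∈ F₀`, `‖X_α - X_β‖_{L^∞} ≤ 2 J(X_α, X_β)`. -/
theorem Linf_le_two_J (Xα Xβ : LagTuple) (hα : InF0 Xα) (hβ : InF0 Xβ) :
    LinfDist Xα Xβ ≤ 2 * Jdist Xα Xβ := by
  obtain ⟨hidα, hyα, hUα, hHα, -, -, -, -⟩ := hα
  obtain ⟨hidβ, hyβ, hUβ, hHβ, -, -, -, -⟩ := hβ
  -- main estimate for a fixed pair of relabeling functions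
  have main : ∀ f₁ f₂ : ℝ → ℝ,
      LinfDist Xα Xβ ≤ 2 * (ELagDist (Xα.comp f₁) Xβ + ELagDist Xα (Xβ.comp f₂)) := by
    intro f₁ f₂
    set Ly : ℝ≥0∞ := ⨆ ξ : ℝ, (‖Xα.y ξ - Xβ.y ξ‖₊ : ℝ≥0∞)
    set LU : ℝ≥0∞ := ⨆ ξ : ℝ, (‖Xα.U ξ - Xβ.U ξ‖₊ : ℝ≥0∞)
    set LH : ℝ≥0∞ := ⨆ ξ : ℝ, (‖Xα.H ξ - Xβ.H ξ‖₊ : ℝ≥0∞)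
    set K₁ : ℝ≥0∞ := ELagDist (Xα.comp f₁) Xβ
    set K₂ : ℝ≥0∞ := ELagDist Xα (Xβ.comp f₂)
    -- the two instances of the key estimate
    obtain ⟨e1y, e1U, e1H⟩ := key_est Xα Xβ hidα hidβ hyα hUα hHα f₁
    obtain ⟨e2y, e2U, e2H⟩ := key_est Xβ Xα hidβ hidα hyβ hUβ hHβ f₂
    -- rewrite the second instance via `‖a - b‖ = ‖b - a‖`
    have revS : ∀ F G : ℝ → ℝ, (⨆ ξ : ℝ, (‖F ξ - G ξ‖₊ : ℝ≥0∞)) =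
        ⨆ ξ : ℝ, (‖G ξ - F ξ‖₊ : ℝ≥0∞) :=
      fun F G => iSup_congr fun ξ => by
        rw [← nndist_eq_nnnorm, ← nndist_eq_nnnorm, nndist_comm]
    -- sups of relabeled differences are bounded by the E-distances
    set Y₁ : ℝ≥0∞ := ⨆ ξ : ℝ, (‖Xα.y (f₁ ξ) - Xβ.y ξ‖₊ : ℝ≥0∞)
    set U₁ : ℝ≥0∞ := ⨆ ξ : ℝ, (‖Xα.U (f₁ ξ) - Xβ.U ξ‖₊ : ℝ≥0∞)
    set H₁ : ℝ≥0∞ := ⨆ ξ : ℝ, (‖Xα.H (f₁ ξ) - Xβ.H ξ‖₊ : ℝ≥0∞)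
    set Y₂ : ℝ≥0∞ := ⨆ ξ : ℝ, (‖Xα.y ξ - Xβ.y (f₂ ξ)‖₊ : ℝ≥0∞)
    set U₂ : ℝ≥0∞ := ⨆ ξ : ℝ, (‖Xα.U ξ - Xβ.U (f₂ ξ)‖₊ : ℝ≥0∞)
    set H₂ : ℝ≥0∞ := ⨆ ξ : ℝ, (‖Xα.H ξ - Xβ.H (f₂ ξ)‖₊ : ℝ≥0∞)
    have hK₁ : Y₁ + U₁ + H₁ ≤ K₁ := by
      have h := Linf_le_ELag (Xα.comp f₁) Xβ
      simpa [LinfDist, LagTuple.comp, Function.comp, Y₁, U₁, H₁, K₁] using h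
    have hK₂ : Y₂ + U₂ + H₂ ≤ K₂ := by
      have h := Linf_le_ELag Xα (Xβ.comp f₂)
      simpa [LinfDist, LagTuple.comp, Function.comp, Y₂, U₂, H₂, K₂] using h
    have hy1 : Ly = ⨆ ξ : ℝ, (‖Xβ.y ξ - Xα.y ξ‖₊ : ℝ≥0∞) := revS Xα.y Xβ.y
    have hU1 : LU = ⨆ ξ : ℝ, (‖Xβ.U ξ - Xα.U ξ‖₊ : ℝ≥0∞) := revS Xα.U Xβ.U
    have hH1 : LH = ⨆ ξ : ℝ, (‖Xβ.H ξ - Xα.H ξ‖₊ : ℝ≥0∞) := revS Xα.H Xβ.H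
    have hy2 : Y₂ = ⨆ ξ : ℝ, (‖Xβ.y (f₂ ξ) - Xα.y ξ‖₊ : ℝ≥0∞) := revS _ _
    have hU2 : U₂ = ⨆ ξ : ℝ, (‖Xβ.U (f₂ ξ) - Xα.U ξ‖₊ : ℝ≥0∞) := revS _ _
    have hH2 : H₂ = ⨆ ξ : ℝ, (‖Xβ.H (f₂ ξ) - Xα.H ξ‖₊ : ℝ≥0∞) := revS _ _
    have e2y' : Ly ≤ 2 * Y₂ + H₂ := by rw [hy1, hy2, hH2]; exact e2y
    have e2U' : LU ≤ Y₂ + U₂ + H₂ := by rw [hU1, hy2, hU2, hH2]; exact e2U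
    have e2H' : LH ≤ Y₂ + 2 * H₂ := by rw [hH1, hy2, hH2]; exact e2H
    -- combine
    have hL1 : Ly + LU + LH ≤ 4 * K₁ := by
      calc Ly + LU + LH ≤ (2 * Y₁ + H₁) + (Y₁ + U₁ + H₁) + (Y₁ + 2 * H₁) :=
            add_le_add (add_le_add e1y e1U) e1H
        _ ≤ 4 * (Y₁ + U₁ + H₁) := by
            have : (2 * Y₁ + H₁) + (Y₁ + U₁ + H₁) + (Y₁ + 2 * H₁)
                = 4 * Y₁ + U₁ + 4 * H₁ := by ring
            rw [this]
            have hU : U₁ ≤ 4 * U₁ := le_mul_of_one_le_left zero_le (by norm_num)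
            calc 4 * Y₁ + U₁ + 4 * H₁ ≤ 4 * Y₁ + 4 * U₁ + 4 * H₁ :=
                  add_le_add (add_le_add le_rfl hU) le_rfl
              _ = 4 * (Y₁ + U₁ + H₁) := by ring
        _ ≤ 4 * K₁ := mul_le_mul_right hK₁ 4
    have hL2 : Ly + LU + LH ≤ 4 * K₂ := by
      calc Ly + LU + LH ≤ (2 * Y₂ + H₂) + (Y₂ + U₂ + H₂) + (Y₂ + 2 * H₂) :=
            add_le_add (add_le_add e2y' e2U') e2H'
        _ ≤ 4 * (Y₂ + U₂ + H₂) := by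
            have : (2 * Y₂ + H₂) + (Y₂ + U₂ + H₂) + (Y₂ + 2 * H₂)
                = 4 * Y₂ + U₂ + 4 * H₂ := by ring
            rw [this]
            have hU : U₂ ≤ 4 * U₂ := le_mul_of_one_le_left zero_le (by norm_num)
            calc 4 * Y₂ + U₂ + 4 * H₂ ≤ 4 * Y₂ + 4 * U₂ + 4 * H₂ :=
                  add_le_add (add_le_add le_rfl hU) le_rfl
              _ = 4 * (Y₂ + U₂ + H₂) := by ring
        _ ≤ 4 * K₂ := mul_le_mul_right hK₂ 4
    have h2L : 2 * (Ly + LU + LH) ≤ 2 * (2 * (K₁ + K₂)) := by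
      calc 2 * (Ly + LU + LH) = (Ly + LU + LH) + (Ly + LU + LH) := two_mul _
        _ ≤ 4 * K₁ + 4 * K₂ := add_le_add hL1 hL2
        _ = 2 * (2 * (K₁ + K₂)) := by ring
    have hL : Ly + LU + LH ≤ 2 * (K₁ + K₂) :=
      (ENNReal.mul_le_mul_iff_right (by norm_num) (by norm_num)).mp h2L
    simpa [LinfDist, Ly, LU, LH] using hL
  -- pass to the infimum
  have hdiv : LinfDist Xα Xβ / 2 ≤ Jdist Xα Xβ := by
    rw [Jdist]
    refine le_iInf fun f₁ => le_iInf fun _ => le_iInf fun f₂ => le_iInf fun _ => ?_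
    rw [ENNReal.div_le_iff' (by norm_num) (by norm_num)]
    exact main f₁ f₂
  calc LinfDist Xα Xβ = LinfDist Xα Xβ / 2 * 2 := by
        rw [ENNReal.div_mul_cancel (by norm_num) (by norm_num)]
    _ ≤ Jdist Xα Xβ * 2 := mul_le_mul_left hdiv 2
    _ = 2 * Jdist Xα Xβ := mul_comm _ _
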